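/- Let (X, 𝓔) be a uniformly locally finite coarse space. For every E ∈ 𝓔 there is a finite partition E = E₁ ⊔ … ⊔ Eₙ such that each Eᵢ is the graph of a partial bijection (i.e., both coordinate projections restricted to Eᵢ are injective). -/
import Mathlib


open ContinuousLinearMap

/-- A coarse structure on `X`: a collection of subsets of `X × X` containing the diagonal
and closed under subsets, finite unions, inverses, and composition. -/
structure CoarseStructure (X : Type*) where
  sets : Set (Set (X × X))
  diagonal_mem : {p : X × X | p.1 = p.2} ∈ sets
  subset_mem : ∀ E ∈ sets, ∀ F ⊆ E, F ∈ sets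
  union_mem : ∀ E ∈ sets, ∀ F ∈ sets, E ∪ F ∈ sets
  inv_mem : ∀ E ∈ sets, {p : X × X | (p.2, p.1) ∈ E} ∈ sets
  comp_mem : ∀ E ∈ sets, ∀ F ∈ sets,
    {p : X × X | ∃ y, (p.1, y) ∈ E ∧ (y, p.2) ∈ F} ∈ sets

/-- A coarse structure is uniformly locally finite if each entourage has uniformly
finite sections. -/
def CoarseStructure.ULF {X : Type*} (𝓔 : CoarseStructure X) : Prop :=
  ∀ E ∈ 𝓔.sets, ∃ k : ℕ, ∀ x : X,
    Set.Finite {y | (x, y) ∈ E} ∧ Nat.card {y | (x, y) ∈ E} ≤ k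


/-- In a u.l.f. coarse space, every entourage admits a finite partition into graphs of
partial bijections. -/
theorem entourage_partition_partial_bijections {X : Type*}
    (𝓔 : CoarseStructure X) (hulf : 𝓔.ULF) (E : Set (X × X)) (hE : E ∈ 𝓔.sets) :
    ∃ (n : ℕ) (Es : Fin n → Set (X × X)),
      (∀ i j, i ≠ j → Disjoint (Es i) (Es j)) ∧
      (⋃ i, Es i) = E ∧
      ∀ i, (∀ x y y', (x, y) ∈ Es i → (x, y') ∈ Es i → y = y') ∧
           (∀ x x' y, (x, y) ∈ Es i → (x', y) ∈ Es i → x = x') := by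
  classical
  obtain ⟨k, hk⟩ := hulf E hE
  obtain ⟨k', hk'⟩ := hulf _ (𝓔.inv_mem E hE)
  have hrowfin : ∀ x : X, ({y | (x, y) ∈ E}).Finite := fun x => (hk x).1
  have hcolfin : ∀ y : X, ({x | (x, y) ∈ E}).Finite := fun y => (hk' y).1
  have hrowemb : ∀ x : X, ∃ f : {y | (x, y) ∈ E} → Fin k, Function.Injective f := by
    intro x
    haveI := (hrowfin x).fintype
    have h1 : Fintype.card {y | (x, y) ∈ E} ≤ k := by
      rw [← Nat.card_eq_fintype_card]; exact (hk x).2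
    have h2 : Fintype.card {y | (x, y) ∈ E} ≤ Fintype.card (Fin k) := by
      simpa using h1
    obtain ⟨f⟩ := Function.Embedding.nonempty_of_card_le h2
    exact ⟨f, f.injective⟩
  have hcolemb : ∀ y : X, ∃ g : {x | (x, y) ∈ E} → Fin k', Function.Injective g := by
    intro y
    haveI := (hcolfin y).fintype
    have h1 : Fintype.card {x | (x, y) ∈ E} ≤ k' := by
      rw [← Nat.card_eq_fintype_card]
      exact le_trans (le_of_eq (by rfl)) ((hk' y).2)
    have h2 : Fintype.card {x | (x, y) ∈ E} ≤ Fintype.card (Fin k') := by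
      simpa using h1
    obtain ⟨g⟩ := Function.Embedding.nonempty_of_card_le h2
    exact ⟨g, g.injective⟩
  choose f hf using hrowemb
  choose g hg using hcolemb
  refine ⟨k * k', fun i =>
    {p | ∃ h : p ∈ E, (finProdFinEquiv.symm i).1 = f p.1 ⟨p.2, h⟩ ∧
      (finProdFinEquiv.symm i).2 = g p.2 ⟨p.1, h⟩}, ?_, ?_, ?_⟩
  · intro i j hij
    rw [Set.disjoint_left]
    rintro p ⟨hp, h1, h2⟩ ⟨hp', h1', h2'⟩
    exact hij (finProdFinEquiv.symm.injective (Prod.ext (h1.trans h1'.symm) (h2.trans h2'.symm)))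
  · ext p
    simp only [Set.mem_iUnion, Set.mem_setOf_eq]
    constructor
    · rintro ⟨i, hp, -⟩; exact hp
    · intro hp
      refine ⟨finProdFinEquiv (f p.1 ⟨p.2, hp⟩, g p.2 ⟨p.1, hp⟩), hp, ?_, ?_⟩ <;>
        simp
  · intro i
    constructor
    · rintro x y y' ⟨h, h1, -⟩ ⟨h', h1', -⟩
      have := hf x (h1.symm.trans h1' : f x ⟨y, h⟩ = f x ⟨y', h'⟩)
      exact Subtype.ext_iff.mp this
    · rintro x x' y ⟨h, -, h2⟩ ⟨h', -, h2'⟩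
      have := hg y (h2.symm.trans h2' : g y ⟨x, h⟩ = g y ⟨x', h'⟩)
      exact Subtype.ext_iff.mp this
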